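/- Let K = ℚ(α) where α is a root of X³ − 2 (equivalently K = ℚ[X]/(X³ − 2)), and let μ : K ⊗_ℚ K → K be the multiplication map x ⊗ y ↦ xy, with L = ker μ. Then K ⊗_ℚ K ≅ K ⊕ L as modules over K ⊗_ℚ K (μ splits), L is isomorphic to K² as a K-vector space, and L is indecomposable as a K ⊗_ℚ K-module. -/

import Mathlib

open TensorProduct Polynomial Module

section Aux

variable {K : Type} [Field K] [Algebra ℚ K]

private lemma qsmul' (q : ℚ) (x : K) : q • x = (q : K) * x := by
  rw [Algebra.smul_def, eq_ratCast (algebraMap ℚ K) q]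

private lemma two_smul_one' : ((2:ℚ)) • (1:K) = 2 := by
  haveI : CharZero K := algebraRat.charZero K
  rw [qsmul']; push_cast; ring

noncomputable def eId (α : K) : K ⊗[ℚ] K :=
  (3:ℚ)⁻¹ • ((1:K) ⊗ₜ[ℚ] (1:K)) + (6:ℚ)⁻¹ • (α ⊗ₜ[ℚ] (α^2)) + (6:ℚ)⁻¹ • ((α^2) ⊗ₜ[ℚ] α)

noncomputable def sElt (α : K) : K ⊗[ℚ] K :=
  (-(6:ℚ)⁻¹) • (α ⊗ₜ[ℚ] α) + (-(3:ℚ)⁻¹) • ((α^2) ⊗ₜ[ℚ] (1:K))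

noncomputable def tElt (α : K) : K ⊗[ℚ] K := (1:K) ⊗ₜ[ℚ] α - α ⊗ₜ[ℚ] (1:K)

private lemma h2l (y : K) : (2:K) ⊗ₜ[ℚ] y = (2:ℚ) • ((1:K) ⊗ₜ[ℚ] y) := by
  rw [← two_smul_one', smul_tmul']

private lemma h2r (y : K) : y ⊗ₜ[ℚ] (2:K) = (2:ℚ) • (y ⊗ₜ[ℚ] (1:K)) := by
  rw [← two_smul_one', tmul_smul]

lemma lmul'_e {α : K} (hα : α ^ 3 = 2) :
    Algebra.TensorProduct.lmul' ℚ (S := K) (eId α) = 1 := by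
  haveI : CharZero K := algebraRat.charZero K
  simp only [eId, map_add, map_smul, Algebra.TensorProduct.lmul'_apply_tmul]
  rw [qsmul', qsmul', qsmul']
  have h1 : α * α ^ 2 = 2 := by rw [← hα]; ring
  have h2 : α ^ 2 * α = 2 := by rw [← hα]; ring
  rw [h1, h2]
  push_cast
  norm_num

lemma alpha_comm_e {α : K} (hα : α ^ 3 = 2) :
    (α ⊗ₜ[ℚ] (1:K)) * eId α = ((1:K) ⊗ₜ[ℚ] α) * eId α := by
  simp only [eId, mul_add, mul_smul_comm, Algebra.TensorProduct.tmul_mul_tmul, one_mul, mul_one]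
  ring_nf
  rw [hα, h2l, h2r]
  module

lemma comm_e {α : K} (hα : α ^ 3 = 2) (hgen : Algebra.adjoin ℚ ({α} : Set K) = ⊤) (x : K) :
    (x ⊗ₜ[ℚ] (1:K)) * eId α = ((1:K) ⊗ₜ[ℚ] x) * eId α := by
  have hx : x ∈ Algebra.adjoin ℚ ({α} : Set K) := hgen.symm ▸ Algebra.mem_top
  induction hx using Algebra.adjoin_induction with
  | mem y hy =>
      rcases hy with rfl
      exact alpha_comm_e hα
  | algebraMap r =>
      simp only [Algebra.algebraMap_eq_smul_one, smul_tmul', tmul_smul, smul_mul_assoc]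
  | add y z _ _ hy hz =>
      simp only [add_tmul, tmul_add, add_mul, hy, hz]
  | mul y z _ _ hy hz =>
      have h1 : (y * z) ⊗ₜ[ℚ] (1:K) = (y ⊗ₜ[ℚ] (1:K)) * (z ⊗ₜ[ℚ] (1:K)) := by
        simp [Algebra.TensorProduct.tmul_mul_tmul]
      have h2 : (1:K) ⊗ₜ[ℚ] (y * z) = ((1:K) ⊗ₜ[ℚ] z) * ((1:K) ⊗ₜ[ℚ] y) := by
        simp [Algebra.TensorProduct.tmul_mul_tmul, mul_comm]
      calc ((y * z) ⊗ₜ[ℚ] (1:K)) * eId α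
          = (y ⊗ₜ[ℚ] (1:K)) * ((z ⊗ₜ[ℚ] (1:K)) * eId α) := by rw [h1, mul_assoc]
        _ = (y ⊗ₜ[ℚ] (1:K)) * (((1:K) ⊗ₜ[ℚ] z) * eId α) := by rw [hz]
        _ = ((1:K) ⊗ₜ[ℚ] z) * ((y ⊗ₜ[ℚ] (1:K)) * eId α) := by ring
        _ = ((1:K) ⊗ₜ[ℚ] z) * (((1:K) ⊗ₜ[ℚ] y) * eId α) := by rw [hy]
        _ = ((1:K) ⊗ₜ[ℚ] (y * z)) * eId α := by rw [h2, mul_assoc]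

lemma mul_e {α : K} (hα : α ^ 3 = 2) (hgen : Algebra.adjoin ℚ ({α} : Set K) = ⊤)
    (a : K ⊗[ℚ] K) :
    a * eId α = ((Algebra.TensorProduct.lmul' ℚ (S := K) a) ⊗ₜ[ℚ] (1:K)) * eId α := by
  induction a using TensorProduct.induction_on with
  | zero => simp
  | tmul x y =>
      have h1 : x ⊗ₜ[ℚ] y = (x ⊗ₜ[ℚ] (1:K)) * ((1:K) ⊗ₜ[ℚ] y) := by
        simp [Algebra.TensorProduct.tmul_mul_tmul]
      have h2 : (x * y) ⊗ₜ[ℚ] (1:K) = (x ⊗ₜ[ℚ] (1:K)) * (y ⊗ₜ[ℚ] (1:K)) := by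
        simp [Algebra.TensorProduct.tmul_mul_tmul]
      rw [Algebra.TensorProduct.lmul'_apply_tmul, h1, h2, mul_assoc, mul_assoc,
        ← comm_e hα hgen y]
  | add u v hu hv =>
      rw [map_add, add_mul, hu, hv, add_tmul, add_mul]

lemma e_idem {α : K} (hα : α ^ 3 = 2) (hgen : Algebra.adjoin ℚ ({α} : Set K) = ⊤) :
    eId α * eId α = eId α := by
  rw [mul_e hα hgen, lmul'_e hα, ← Algebra.TensorProduct.one_def, one_mul]

lemma s_mul_t {α : K} (hα : α ^ 3 = 2) : sElt α * tElt α = 1 - eId α := by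
  simp only [sElt, tElt, eId, mul_sub, mul_add, add_mul, smul_mul_assoc, mul_smul_comm,
    Algebra.TensorProduct.tmul_mul_tmul, one_mul, mul_one, Algebra.TensorProduct.one_def]
  ring_nf
  rw [hα, h2l]
  module

end Aux

section NumTh

lemma rat_cube_ne_two (b : ℚ) : b ^ 3 ≠ 2 := by
  intro hb
  have hden : (b.den : ℚ) ≠ 0 := by exact_mod_cast b.den_nz
  have hb' : (b.num : ℚ) ^ 3 = 2 * (b.den : ℚ) ^ 3 := by
    have h := Rat.num_div_den b
    rw [← h] at hb
    field_simp at hb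
    linarith [hb]
  have hZ : b.num ^ 3 = 2 * (b.den : ℤ) ^ 3 := by exact_mod_cast hb'
  have h2num : (2 : ℤ) ∣ b.num := by
    have : (2 : ℤ) ∣ b.num ^ 3 := ⟨(b.den : ℤ) ^ 3, hZ⟩
    exact (Int.Prime.dvd_pow' (by norm_num) this)
  obtain ⟨k, hk⟩ := h2num
  have hden3 : (b.den : ℤ) ^ 3 = 2 * (2 * k ^ 3) := by
    rw [hk] at hZ; ring_nf at hZ ⊢; linarith
  have h2den : (2 : ℤ) ∣ (b.den : ℤ) := by
    have : (2 : ℤ) ∣ (b.den : ℤ) ^ 3 := ⟨2 * k ^ 3, hden3⟩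
    exact (Int.Prime.dvd_pow' (by norm_num) this)
  have h2den' : (2 : ℕ) ∣ b.den := by exact_mod_cast h2den
  have h2num' : (2 : ℕ) ∣ b.num.natAbs := by
    have := Int.natAbs_dvd_natAbs.mpr (hk ▸ Dvd.intro k rfl : (2:ℤ) ∣ b.num)
    simpa using this
  have := b.reduced
  have h2 : (2 : ℕ) ∣ Nat.gcd b.num.natAbs b.den := Nat.dvd_gcd h2num' h2den'
  rw [this] at h2
  omega

end NumTh

section Deg

variable {K : Type} [Field K] [Algebra ℚ K]

lemma irr_cube : Irreducible (X ^ 3 - C (2:ℚ)) :=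
  X_pow_sub_C_irreducible_of_prime (by norm_num) (fun b => rat_cube_ne_two b)

lemma aeval_cube {α : K} (hα : α ^ 3 = 2) : (aeval α) (X ^ 3 - C (2:ℚ)) = 0 := by
  haveI : CharZero K := algebraRat.charZero K
  simp [hα]

lemma integral_alpha {α : K} (hα : α ^ 3 = 2) : IsIntegral ℚ α :=
  ⟨X ^ 3 - C (2:ℚ), monic_X_pow_sub_C _ (by norm_num), aeval_cube hα⟩

lemma minpoly_alpha {α : K} (hα : α ^ 3 = 2) : minpoly ℚ α = X ^ 3 - C (2:ℚ) :=
  (minpoly.eq_of_irreducible_of_monic irr_cube (aeval_cube hα)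
    (monic_X_pow_sub_C _ (by norm_num))).symm

lemma adjoin_IF_top {α : K} (hgen : Algebra.adjoin ℚ ({α} : Set K) = ⊤) :
    IntermediateField.adjoin ℚ ({α} : Set K) = ⊤ := by
  apply IntermediateField.toSubalgebra_injective
  rw [IntermediateField.top_toSubalgebra]
  exact le_antisymm le_top (hgen ▸ IntermediateField.algebra_adjoin_le_adjoin ℚ _)

noncomputable def pbK {α : K} (hα : α ^ 3 = 2) (hgen : Algebra.adjoin ℚ ({α} : Set K) = ⊤) :
    PowerBasis ℚ K :=
  (Algebra.adjoin.powerBasis (integral_alpha hα)).map <|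
    (Subalgebra.equivOfEq _ _ hgen).trans Subalgebra.topEquiv

lemma fd_K {α : K} (hα : α ^ 3 = 2) (hgen : Algebra.adjoin ℚ ({α} : Set K) = ⊤) :
    FiniteDimensional ℚ K :=
  (pbK hα hgen).finite

lemma finrank_K {α : K} (hα : α ^ 3 = 2) (hgen : Algebra.adjoin ℚ ({α} : Set K) = ⊤) :
    Module.finrank ℚ K = 3 := by
  rw [(pbK hα hgen).finrank]
  show (Algebra.adjoin.powerBasis (integral_alpha hα)).dim = 3
  rw [Algebra.adjoin.powerBasis_dim, minpoly_alpha hα]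
  compute_degree!

lemma cube_root_unique {α : K} (hα : α ^ 3 = 2) (hgen : Algebra.adjoin ℚ ({α} : Set K) = ⊤)
    {c : K} (hc : c ^ 3 = 2) : c = α := by
  haveI : CharZero K := algebraRat.charZero K
  haveI := fd_K hα hgen
  by_contra hne
  have hα0 : α ≠ 0 := by
    intro h; rw [h] at hα; norm_num at hα
  set x : K := c * α⁻¹ with hxdef
  have hx3 : x ^ 3 = 1 := by
    rw [hxdef, mul_pow, hc, inv_pow, hα]
    norm_num
  have hx1 : x ≠ 1 := by
    intro h
    apply hne
    have : c = x * α := by rw [hxdef, mul_assoc, inv_mul_cancel₀ hα0, mul_one]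
    rw [this, h, one_mul]
  have hx : x ^ 2 + x + 1 = 0 := by
    have hfac : (x - 1) * (x ^ 2 + x + 1) = 0 := by linear_combination hx3
    rcases mul_eq_zero.mp hfac with h | h
    · exact absurd (by linear_combination h) hx1
    · exact h
  have hint : IsIntegral ℚ x := ⟨X ^ 2 + X + 1, by monicity!, by simp; linear_combination hx⟩
  have hdvd : minpoly ℚ x ∣ X ^ 2 + X + 1 := minpoly.dvd ℚ x (by simp; linear_combination hx)
  have hle : (minpoly ℚ x).natDegree ≤ 2 := by
    have h := Polynomial.natDegree_le_of_dvd hdvd (by intro h; simpa using congrArg (eval 0) h)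
    simpa [Polynomial.natDegree_X_pow_add_C] using h.trans_eq (by compute_degree!)
  have hne1 : (minpoly ℚ x).natDegree ≠ 1 := by
    intro h1
    obtain ⟨r, hr⟩ := minpoly.natDegree_eq_one_iff.mp h1
    have : (algebraMap ℚ K) (r ^ 2 + r + 1) = 0 := by
      rw [map_add, map_add, map_pow, map_one, hr]
      exact hx
    have hr0 : r ^ 2 + r + 1 = 0 := by
      exact (map_eq_zero_iff _ (algebraMap ℚ K).injective).mp this
    nlinarith [sq_nonneg (2 * r + 1)]
  have hd2 : (minpoly ℚ x).natDegree = 2 := by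
    have := minpoly.natDegree_pos hint
    omega
  have hfr : Module.finrank ℚ (IntermediateField.adjoin ℚ ({x} : Set K)) = 2 := by
    rw [IntermediateField.adjoin.finrank hint, hd2]
  have hmul := Module.finrank_mul_finrank ℚ (IntermediateField.adjoin ℚ ({x} : Set K)) K
  rw [hfr, finrank_K hα hgen] at hmul
  omega

end Deg

section Main

variable {K : Type} [Field K] [Algebra ℚ K]

noncomputable def muK : (K ⊗[ℚ] K) →ₗ[K] K where
  toFun := Algebra.TensorProduct.lmul' ℚ (S := K)
  map_add' := fun x y => map_add _ x y
  map_smul' := fun r x => by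
    simp only [RingHom.id_apply, smul_eq_mul]
    rw [Algebra.smul_def, map_mul, Algebra.TensorProduct.algebraMap_apply,
      Algebra.TensorProduct.lmul'_apply_tmul]
    simp

lemma ker_muK (L : Ideal (K ⊗[ℚ] K))
    (hL : L = RingHom.ker (Algebra.TensorProduct.lmul' ℚ (S := K)).toRingHom) :
    LinearMap.ker (muK (K := K)) = L.restrictScalars K := by
  ext x
  simp only [LinearMap.mem_ker, Submodule.restrictScalars_mem, hL, RingHom.mem_ker]
  rfl

lemma finrank_L {α : K} (hα : α ^ 3 = 2) (hgen : Algebra.adjoin ℚ ({α} : Set K) = ⊤)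
    (L : Ideal (K ⊗[ℚ] K))
    (hL : L = RingHom.ker (Algebra.TensorProduct.lmul' ℚ (S := K)).toRingHom) :
    Module.finrank K (L.restrictScalars K) = 2 := by
  haveI := fd_K hα hgen
  have h1 := LinearMap.finrank_range_add_finrank_ker (muK (K := K))
  have hsurj : LinearMap.range (muK (K := K)) = ⊤ :=
    LinearMap.range_eq_top.mpr (fun x => ⟨x ⊗ₜ[ℚ] 1, by
      show Algebra.TensorProduct.lmul' ℚ (S := K) (x ⊗ₜ[ℚ] 1) = x
      rw [Algebra.TensorProduct.lmul'_apply_tmul, mul_one]⟩)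
  rw [hsurj, finrank_top, finrank_self, Module.finrank_baseChange, finrank_K hα hgen,
    ker_muK L hL] at h1
  omega

end Main

set_option maxHeartbeats 1000000 in
/-- Let `K = ℚ(α)` where `α` is a root of `X³ - 2`.  Let
`μ : K ⊗_ℚ K → K` be the multiplication map `x ⊗ y ↦ x * y` and `L = ker μ`.  Then:
(1) `μ` splits as a map of `K ⊗_ℚ K`-modules (where `K` is a `K ⊗_ℚ K`-module via `μ`),
so `K ⊗_ℚ K ≅ K ⊕ L` as `K ⊗_ℚ K`-modules; in particular `L` has a complementary
submodule in `K ⊗_ℚ K`;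
(2) `L ≅ K²` as `K`-vector spaces (for the `K`-action on the left tensor factor);
(3) `L` is an indecomposable `K ⊗_ℚ K`-module. -/
theorem kernel_mul_indecomposable
    (K : Type) [Field K] [Algebra ℚ K] (α : K) (hα : α ^ 3 = 2)
    (hgen : Algebra.adjoin ℚ ({α} : Set K) = ⊤)
    (L : Ideal (K ⊗[ℚ] K)) (hL : L = RingHom.ker (Algebra.TensorProduct.lmul' ℚ
      (S := K)).toRingHom) :
    ((∃ ν : K →ₗ[ℚ] K ⊗[ℚ] K,
        (∀ x : K, Algebra.TensorProduct.lmul' ℚ (S := K) (ν x) = x) ∧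
        (∀ (a : K ⊗[ℚ] K) (x : K), ν (Algebra.TensorProduct.lmul' ℚ (S := K) a * x)
          = a * ν x)) ∧
      (∃ I : Ideal (K ⊗[ℚ] K), IsCompl L I)) ∧
    Nonempty ((L.restrictScalars K) ≃ₗ[K] (Fin 2 → K)) ∧
    (Nontrivial L ∧
      ∀ p q : Submodule (K ⊗[ℚ] K) L, IsCompl p q → p = ⊥ ∨ q = ⊥) := by
  haveI : CharZero K := algebraRat.charZero K
  haveI : FiniteDimensional ℚ K := fd_K hα hgen
  set e : K ⊗[ℚ] K := eId α with he
  have hmulE : ∀ a : K ⊗[ℚ] K,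
      a * e = ((Algebra.TensorProduct.lmul' ℚ (S := K) a) ⊗ₜ[ℚ] (1:K)) * e :=
    fun a => mul_e hα hgen a
  have hLmem : ∀ x ∈ L, Algebra.TensorProduct.lmul' ℚ (S := K) x = 0 := by
    intro x hx; rw [hL] at hx; exact hx
  have hLe : ∀ x ∈ L, x * e = 0 := fun x hx => by
    rw [hmulE x, hLmem x hx, zero_tmul, zero_mul]
  -- the linear equivalence (part 2)
  have hfr2 : Module.finrank K (L.restrictScalars K) = 2 := finrank_L hα hgen L hL
  haveI : FiniteDimensional K (L.restrictScalars K) := inferInstance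
  have equiv2 : (L.restrictScalars K) ≃ₗ[K] (Fin 2 → K) :=
    (Module.finBasisOfFinrankEq K _ hfr2).equivFun
  refine ⟨⟨?_, ?_⟩, ⟨equiv2⟩, ?_, ?_⟩
  · -- splitting ν
    refine ⟨(LinearMap.mulRight ℚ e).comp ((TensorProduct.mk ℚ K K).flip 1), ?_, ?_⟩
    · intro x
      show Algebra.TensorProduct.lmul' ℚ (S := K) ((x ⊗ₜ[ℚ] (1:K)) * e) = x
      rw [map_mul, Algebra.TensorProduct.lmul'_apply_tmul, lmul'_e hα, mul_one, mul_one]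
    · intro a x
      show ((Algebra.TensorProduct.lmul' ℚ (S := K) a * x) ⊗ₜ[ℚ] (1:K)) * e
        = a * ((x ⊗ₜ[ℚ] (1:K)) * e)
      have h1 : (Algebra.TensorProduct.lmul' ℚ (S := K) a * x) ⊗ₜ[ℚ] (1:K)
          = (x ⊗ₜ[ℚ] (1:K)) * ((Algebra.TensorProduct.lmul' ℚ (S := K) a) ⊗ₜ[ℚ] (1:K)) := by
        rw [Algebra.TensorProduct.tmul_mul_tmul, mul_one, mul_comm]
      rw [h1, mul_assoc, ← hmulE a]
      ring
  · -- complement ideal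
    refine ⟨Ideal.span {e}, ?_, ?_⟩
    · rw [disjoint_iff, eq_bot_iff]
      rintro x hx
      obtain ⟨hxL, hxI⟩ := Submodule.mem_inf.mp hx
      obtain ⟨a, ha⟩ := Ideal.mem_span_singleton'.mp hxI
      have hxe : x = x * e := by
        rw [← ha, mul_assoc, e_idem hα hgen]
      rw [hLe x hxL] at hxe
      simpa using hxe
    · rw [codisjoint_iff, eq_top_iff]
      intro x _
      refine Submodule.mem_sup.mpr ⟨x - x * e, ?_, x * e, ?_, by ring⟩
      · rw [hL]
        show Algebra.TensorProduct.lmul' ℚ (S := K) (x - x * e) = 0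
        rw [map_sub, map_mul, lmul'_e hα, mul_one, sub_self]
      · exact Ideal.mem_span_singleton'.mpr ⟨x, rfl⟩
  · -- Nontrivial L
    exact equiv2.toEquiv.nontrivial
  · -- indecomposability
    intro p q hpq
    by_contra hcon
    push_neg at hcon
    obtain ⟨hp, hq⟩ := hcon
    have eqLK : (L.restrictScalars K) ≃ₗ[K] L :=
      (Submodule.restrictScalarsEquiv K (K ⊗[ℚ] K) (K ⊗[ℚ] K) L).restrictScalars K
    haveI : FiniteDimensional K L := Module.Finite.equiv eqLK
    have hLfr : Module.finrank K L = 2 := by rw [← eqLK.finrank_eq, hfr2]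
    -- restrict scalars of p and q
    have hcompl' : IsCompl (p.restrictScalars K) (q.restrictScalars K) := by
      constructor
      · rw [disjoint_iff, eq_bot_iff]
        intro x hx
        have : x ∈ p ⊓ q := ⟨hx.1, hx.2⟩
        rw [disjoint_iff.mp hpq.1] at this
        simpa using this
      · rw [codisjoint_iff, eq_top_iff]
        intro x _
        have : x ∈ p ⊔ q := by rw [codisjoint_iff.mp hpq.2]; trivial
        obtain ⟨a, ha, b, hb, rfl⟩ := Submodule.mem_sup.mp this
        exact Submodule.mem_sup.mpr ⟨a, ha, b, hb, rfl⟩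
    have hsum := Submodule.finrank_add_eq_of_isCompl hcompl'
    rw [hLfr] at hsum
    obtain ⟨x, hxp, hx0⟩ := Submodule.ne_bot_iff p |>.mp hp
    obtain ⟨z, hzq, hz0⟩ := Submodule.ne_bot_iff q |>.mp hq
    have hppos : 0 < Module.finrank K (p.restrictScalars K) :=
      (Module.finrank_pos_iff (R := K) (M := p.restrictScalars K)).mpr ⟨⟨x, hxp⟩, 0, fun h => hx0 (by simpa using congrArg Subtype.val h)⟩
    have hqpos : 0 < Module.finrank K (q.restrictScalars K) :=
      (Module.finrank_pos_iff (R := K) (M := q.restrictScalars K)).mpr ⟨⟨z, hzq⟩, 0, fun h => hz0 (by simpa using congrArg Subtype.val h)⟩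
    have hp1 : Module.finrank K (p.restrictScalars K) = 1 := by omega
    have hspan : Submodule.span K {x} = p.restrictScalars K :=
      Submodule.eq_of_le_of_finrank_le
        (Submodule.span_le.mpr (by simpa using hxp))
        (by rw [hp1, finrank_span_singleton hx0])
    have hmem : ((1:K) ⊗ₜ[ℚ] α) • x ∈ Submodule.span K {x} := by
      rw [hspan, Submodule.restrictScalars_mem]; exact p.smul_mem _ hxp
    obtain ⟨c, hc⟩ := Submodule.mem_span_singleton.mp hmem
    -- pass to the ambient ring
    have hy0 : (x : K ⊗[ℚ] K) ≠ 0 := fun h => hx0 (Subtype.ext h)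
    have hcy : ((1:K) ⊗ₜ[ℚ] α) * (x : K ⊗[ℚ] K) = (c ⊗ₜ[ℚ] (1:K)) * (x : K ⊗[ℚ] K) := by
      have h1 := congrArg (Subtype.val) hc
      have h2 : ((c • x : L) : K ⊗[ℚ] K) = (c ⊗ₜ[ℚ] (1:K)) * (x : K ⊗[ℚ] K) := by
        rw [Submodule.coe_smul_of_tower, Algebra.smul_def, Algebra.TensorProduct.algebraMap_apply]
        simp
      have h3 : (((((1:K) ⊗ₜ[ℚ] α)) • x : L) : K ⊗[ℚ] K)
          = ((1:K) ⊗ₜ[ℚ] α) * (x : K ⊗[ℚ] K) := by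
        rw [Submodule.coe_smul, smul_eq_mul]
      rw [← h3, ← h1, h2]
    have hdiff : (((1:K) ⊗ₜ[ℚ] α) - (c ⊗ₜ[ℚ] (1:K))) * (x : K ⊗[ℚ] K) = 0 := by
      rw [sub_mul, hcy, sub_self]
    have hA : ((1:K) ⊗ₜ[ℚ] α) ^ 3 = (1:K) ⊗ₜ[ℚ] (α ^ 3) := by
      simp [pow_succ, Algebra.TensorProduct.tmul_mul_tmul]
    have hB : (c ⊗ₜ[ℚ] (1:K)) ^ 3 = (c ^ 3) ⊗ₜ[ℚ] (1:K) := by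
      simp [pow_succ, Algebra.TensorProduct.tmul_mul_tmul]
    have hcube : (((2:K) - c ^ 3) ⊗ₜ[ℚ] (1:K)) * (x : K ⊗[ℚ] K) = 0 := by
      have step : (((1:K) ⊗ₜ[ℚ] (α ^ 3)) - ((c ^ 3) ⊗ₜ[ℚ] (1:K))) * (x : K ⊗[ℚ] K) = 0 := by
        rw [← hA, ← hB]
        calc (((1:K) ⊗ₜ[ℚ] α) ^ 3 - (c ⊗ₜ[ℚ] (1:K)) ^ 3) * (x : K ⊗[ℚ] K)
            = (((1:K) ⊗ₜ[ℚ] α) ^ 2 + ((1:K) ⊗ₜ[ℚ] α) * (c ⊗ₜ[ℚ] (1:K)) + (c ⊗ₜ[ℚ] (1:K)) ^ 2)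
              * ((((1:K) ⊗ₜ[ℚ] α) - (c ⊗ₜ[ℚ] (1:K))) * (x : K ⊗[ℚ] K)) := by ring
          _ = 0 := by rw [hdiff, mul_zero]
      rw [hα] at step
      have h12 : ((2:K) - c ^ 3) ⊗ₜ[ℚ] (1:K)
          = ((1:K) ⊗ₜ[ℚ] (2:K)) - ((c ^ 3) ⊗ₜ[ℚ] (1:K)) := by
        rw [sub_tmul, h2r, h2l]
      rw [h12]
      exact step
    by_cases hc3 : (2:K) - c ^ 3 = 0
    · -- c is a cube root of 2, hence c = α
      have hceq : c = α := cube_root_unique hα hgen ((sub_eq_zero.mp hc3).symm)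
      rw [hceq] at hdiff
      have htx : tElt α * (x : K ⊗[ℚ] K) = 0 := by
        rw [tElt]
        exact hdiff
      have hxL : (x : K ⊗[ℚ] K) ∈ L := x.2
      have hxe : (x : K ⊗[ℚ] K) * e = 0 := hLe _ hxL
      have hfin : (x : K ⊗[ℚ] K) = sElt α * (tElt α * (x : K ⊗[ℚ] K)) := by
        have h1 : (x : K ⊗[ℚ] K) = (x : K ⊗[ℚ] K) * (1 - e) := by
          rw [mul_sub, mul_one, hxe, sub_zero]
        rw [← s_mul_t hα] at h1
        conv_lhs => rw [h1]
        ring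
      rw [htx, mul_zero] at hfin
      exact hy0 hfin
    · have hfin : (x : K ⊗[ℚ] K)
          = ((((2:K) - c ^ 3)⁻¹) ⊗ₜ[ℚ] (1:K)) * ((((2:K) - c ^ 3) ⊗ₜ[ℚ] (1:K))
              * (x : K ⊗[ℚ] K)) := by
        rw [← mul_assoc, Algebra.TensorProduct.tmul_mul_tmul, inv_mul_cancel₀ hc3, mul_one,
          ← Algebra.TensorProduct.one_def, one_mul]
      rw [hcube, mul_zero] at hfin
      exact hy0 hfin
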